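/- Let H be a simple contracted minimal Q-triconnected graph. If e is an edge of H such that neither endpoint of e belongs to Q, then e is nonremovable. -/

import Mathlib

open SimpleGraph

universe u

variable {V : Type u}

/-- `S` separates `A` from `B` in `G`: every walk from `A` to `B` meets `S`. -/
def IsSep (G : SimpleGraph V) (A B S : Set V) : Prop :=
  ∀ a ∈ A, ∀ b ∈ B, ∀ w : G.Walk a b, ∃ s ∈ S, s ∈ w.support

/-- A system of `k` pairwise vertex-disjoint `A`–`B` paths. -/
def PathSys (G : SimpleGraph V) (A B : Set V) (k : ℕ) : Prop :=
  ∃ (a b : Fin k → V) (w : ∀ i, G.Walk (a i) (b i)),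
    (∀ i, a i ∈ A) ∧ (∀ i, b i ∈ B) ∧ (∀ i, (w i).IsPath) ∧
    ∀ i j, i ≠ j → ∀ z, z ∈ (w i).support → z ∉ (w j).support

/-- vertices reachable from `A` by walks avoiding `S` entirely. -/
def mside (G : SimpleGraph V) (A S : Set V) : Set V :=
  {v | ∃ a ∈ A, ∃ w : G.Walk a v, ∀ z ∈ w.support, z ∉ S}

/-- restriction of `G` to a vertex set, as a graph on the same type. -/
def restrict (G : SimpleGraph V) (W : Set V) : SimpleGraph V where
  Adj a b := G.Adj a b ∧ a ∈ W ∧ b ∈ W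
  symm := ⟨fun a b ⟨h, ha, hb⟩ => ⟨h.symm, hb, ha⟩⟩
  loopless := ⟨fun a h => G.ne_of_adj h.1 rfl⟩

lemma restrict_le (G : SimpleGraph V) (W : Set V) : restrict G W ≤ G :=
  fun _ _ h => h.1

lemma exists_prefix {G : SimpleGraph V} {a b : V} (S : Set V) (p : G.Walk a b)
    (h : ∃ z ∈ S, z ∈ p.support) :
    ∃ s ∈ S, ∃ (q : G.Walk a s) (r : G.Walk s b),
      q.append r = p ∧ (∀ z ∈ q.support, z ∈ S → z = s) := by
  induction p with
  | nil =>
    obtain ⟨z, hz, hz'⟩ := h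
    simp only [Walk.support_nil, List.mem_singleton] at hz'
    subst hz'
    exact ⟨z, hz, Walk.nil, Walk.nil, rfl, by simp⟩
  | @cons c d e hadj p ih =>
    by_cases hc : c ∈ S
    · exact ⟨c, hc, Walk.nil, Walk.cons hadj p, rfl, by simp⟩
    · have h' : ∃ z ∈ S, z ∈ p.support := by
        obtain ⟨z, hz, hz'⟩ := h
        simp only [Walk.support_cons, List.mem_cons] at hz'
        rcases hz' with rfl | hz'
        · exact absurd hz hc
        · exact ⟨z, hz, hz'⟩
      obtain ⟨s, hs, q, r, hqr, hq⟩ := ih h'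
      refine ⟨s, hs, Walk.cons hadj q, r, by rw [Walk.cons_append, hqr], ?_⟩
      intro z hz hzS
      simp only [Walk.support_cons, List.mem_cons] at hz
      rcases hz with rfl | hz
      · exact absurd hzS hc
      · exact hq z hz hzS

lemma isPath_of_append_left {G : SimpleGraph V} {a s b : V} {q : G.Walk a s}
    {r : G.Walk s b} {p : G.Walk a b} (hqr : q.append r = p) (hp : p.IsPath) :
    q.IsPath := by
  rw [Walk.isPath_def] at hp ⊢
  have := hqr ▸ (Walk.support_append q r)
  rw [this] at hp
  exact hp.of_append_left

lemma not_mem_left_of_append {G : SimpleGraph V} {a s b : V} {q : G.Walk a s}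
    {r : G.Walk s b} {p : G.Walk a b} (hqr : q.append r = p) (hp : p.IsPath)
    {z : V} (hz : z ∈ r.support) (hne : z ≠ s) : z ∉ q.support := by
  rw [Walk.isPath_def] at hp
  have hs := hqr ▸ (Walk.support_append q r)
  rw [hs] at hp
  have hz' : z ∈ r.support.tail := by
    cases r with
    | nil => simp at hz; exact absurd hz hne
    | cons h r' =>
      simp only [Walk.support_cons, List.mem_cons] at hz
      rcases hz with rfl | hz
      · exact absurd rfl hne
      · simpa using hz
  intro hzq
  exact (List.disjoint_of_nodup_append hp) hzq hz'

lemma restrict_support {G : SimpleGraph V} {W : Set V} {a b : V}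
    (w : (restrict G W).Walk a b) (ha : a ∈ W) : ∀ z ∈ w.support, z ∈ W := by
  induction w with
  | nil => intro z hz; simp at hz; subst hz; exact ha
  | @cons c d e hadj p ih =>
    intro z hz
    simp only [Walk.support_cons, List.mem_cons] at hz
    rcases hz with rfl | hz
    · exact ha
    · exact ih hadj.2.2 z hz

lemma isSep_symm {G : SimpleGraph V} {A B S : Set V} (h : IsSep G A B S) :
    IsSep G B A S := by
  intro b hb a ha w
  obtain ⟨s, hs, hsw⟩ := h a ha b hb w.reverse
  rw [Walk.support_reverse, List.mem_reverse] at hsw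
  exact ⟨s, hs, hsw⟩

lemma mside_disjoint {G : SimpleGraph V} {A B S : Set V} (hS : IsSep G A B S) :
    ∀ z, z ∈ mside G A S → z ∈ mside G B S → False := by
  rintro z ⟨x, hx, w1, hw1⟩ ⟨y, hy, w2, hw2⟩
  obtain ⟨s, hs, hsw⟩ := hS x hx y hy (w1.append w2.reverse)
  rw [Walk.mem_support_append_iff] at hsw
  rcases hsw with h | h
  · exact hw1 s h hs
  · rw [Walk.support_reverse, List.mem_reverse] at h
    exact hw2 s h hs

lemma mside_not_mem_S {G : SimpleGraph V} {A S : Set V} {z : V}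
    (h : z ∈ mside G A S) : z ∉ S := by
  obtain ⟨a, ha, w, hw⟩ := h
  exact hw z w.end_mem_support

lemma mem_mside_self {G : SimpleGraph V} {A S : Set V} {a : V} (ha : a ∈ A)
    (haS : a ∉ S) : a ∈ mside G A S :=
  ⟨a, ha, Walk.nil, by simp [haS]⟩

lemma mside_extend {G : SimpleGraph V} {A S : Set V} {z w : V}
    (hz : z ∈ mside G A S) (h : G.Adj z w) (hw : w ∉ S) : w ∈ mside G A S := by
  obtain ⟨a, ha, p, hp⟩ := hz
  refine ⟨a, ha, p.append (Walk.cons h Walk.nil), ?_⟩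
  intro t ht
  rw [Walk.mem_support_append_iff] at ht
  rcases ht with ht | ht
  · exact hp t ht
  · simp only [Walk.support_cons, Walk.support_nil, List.mem_cons,
      List.not_mem_nil, or_false] at ht
    rcases ht with rfl | rfl
    · exact hp t p.end_mem_support
    · exact hw

/-- In a graph with no edges every walk is trivial. -/
lemma walk_eq_nil_of_no_edges {G : SimpleGraph V} (hG : G.edgeSet = ∅) {a b : V}
    (w : G.Walk a b) : a = b ∧ w.support = [a] := by
  cases w with
  | nil => simp
  | cons h p => exact absurd ((mem_edgeSet G).2 h) (by simp [hG])

lemma pathSys_of_le {G G' : SimpleGraph V} (hle : G' ≤ G) {A B : Set V} {k : ℕ}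
    (h : PathSys G' A B k) : PathSys G A B k := by
  obtain ⟨a, b, w, ha, hb, hp, hd⟩ := h
  refine ⟨a, b, fun i => (w i).transfer G
    (fun e he => edgeSet_mono hle ((w i).edges_subset_edgeSet he)), ha, hb, ?_, ?_⟩
  · intro i
    rw [Walk.isPath_def, Walk.support_transfer]
    exact (hp i).support_nodup
  · intro i j hij z hz
    rw [Walk.support_transfer] at hz ⊢
    exact hd i j hij z hz

/-- Menger base case: a graph with no edges. -/
lemma menger_base [Finite V] {G : SimpleGraph V} (hG : G.edgeSet = ∅) (A B : Set V)
    (k : ℕ) (h : ∀ S : Set V, IsSep G A B S → k ≤ S.ncard) : PathSys G A B k := by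
  have hsep : IsSep G A B (A ∩ B) := by
    intro a ha b hb w
    obtain ⟨rfl, hsupp⟩ := walk_eq_nil_of_no_edges hG w
    exact ⟨a, ⟨ha, hb⟩, by simp [hsupp]⟩
  have hk : k ≤ (A ∩ B).ncard := h _ hsep
  have hfin : (A ∩ B).Finite := Set.toFinite _
  rw [Set.ncard_eq_toFinset_card _ hfin] at hk
  obtain ⟨t, hts, htcard⟩ := Finset.exists_subset_card_eq hk
  have e := t.equivFinOfCardEq htcard
  refine ⟨fun i => (e.symm i : V), fun i => (e.symm i : V), fun i => Walk.nil,
    ?_, ?_, fun i => Walk.IsPath.nil, ?_⟩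
  · intro i
    have := hts (e.symm i).2
    rw [Set.Finite.mem_toFinset] at this
    exact this.1
  · intro i
    have := hts (e.symm i).2
    rw [Set.Finite.mem_toFinset] at this
    exact this.2
  · intro i j hij z hz hz'
    simp only [Walk.support_nil, List.mem_singleton] at hz hz'
    apply hij
    have : (e.symm i : V) = (e.symm j : V) := by rw [← hz, hz']
    exact (Equiv.injective e.symm (Subtype.ext this))

lemma side_walk {G' : SimpleGraph V} {A S P : Set V} (hSP : S ⊆ P) {s₀ : V} :
    ∀ {d} (R : G'.Walk d s₀), R.support.Nodup →
      (∀ z ∈ R.support, z ∈ P → z = s₀) →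
      (d ∈ mside G' A S ∨ d = s₀) → ∀ z ∈ R.support, z ∈ mside G' A S ∨ z = s₀ := by
  intro d R
  induction R with
  | nil =>
    intro _ _ hd z hz
    simp only [Walk.support_nil, List.mem_singleton] at hz
    subst hz; exact hd
  | @cons c e s₁ hadj R' ih =>
    intro hnd honly hd z hz
    simp only [Walk.support_cons, List.mem_cons] at hz
    rcases hz with rfl | hz
    · exact hd
    · have hdms : c ∈ mside G' A S := by
        rcases hd with hd | rfl
        · exact hd
        · exfalso
          rw [Walk.support_cons, List.nodup_cons] at hnd
          exact hnd.1 R'.end_mem_support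
      have he' : e ∈ mside G' A S ∨ e = s₁ := by
        by_cases hes : e = s₁
        · exact Or.inr hes
        · have heP : e ∉ P := fun hP =>
            hes (honly e (by simp [Walk.support_cons]) hP)
          exact Or.inl (mside_extend hdms hadj (fun hS => heP (hSP hS)))
      refine ih ?_ ?_ he' z hz
      · rw [Walk.support_cons, List.nodup_cons] at hnd; exact hnd.2
      · intro t ht htP; exact honly t (by simp [Walk.support_cons, ht]) htP

lemma menger_half [Finite V] {Γ G' : SimpleGraph V} {A B S : Set V} {p q : V} {k : ℕ}
    (hle : G' ≤ Γ)
    (hpq : Γ.Adj p q)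
    (hGG' : ∀ {c d : V} (w : Γ.Walk c d), s(p, q) ∉ w.edges → ∀ e ∈ w.edges, e ∈ G'.edgeSet)
    (hS' : IsSep G' A B S)
    (hScard : S.ncard < k)
    (hk : ∀ T : Set V, IsSep Γ A B T → k ≤ T.ncard)
    (hpA : p ∈ mside G' A S)
    (hqB : q ∈ mside G' B S)
    (IH : ∀ Γ' : SimpleGraph V, Γ'.edgeSet.ncard < Γ.edgeSet.ncard →
      ∀ A' B' : Set V, ∀ k', (∀ T, IsSep Γ' A' B' T → k' ≤ T.ncard) → PathSys Γ' A' B' k')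
    (hcard : G'.edgeSet.ncard < Γ.edgeSet.ncard) :
    ∃ (a f : Fin k → V) (w : ∀ i, Γ.Walk (a i) (f i)),
      (∀ i, a i ∈ A) ∧ (∀ i, f i ∈ insert p S) ∧ (∀ i, (w i).IsPath) ∧
      (∀ i j, i ≠ j → ∀ z, z ∈ (w i).support → z ∉ (w j).support) ∧
      (∀ i, ∀ z ∈ (w i).support, z ∈ mside G' A S ∪ insert p S) ∧
      (∀ i, ∀ z ∈ (w i).support, z ∈ insert p S → z = f i) ∧
      Function.Injective f ∧ (∀ s ∈ insert p S, ∃ i, f i = s) := by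
  classical
  set Sp : Set V := insert p S with hSpdef
  have hpS : p ∉ S := mside_not_mem_S hpA
  have hqS : q ∉ S := mside_not_mem_S hqB
  have hpqne : p ≠ q := hpq.ne
  set WA : Set V := mside G' A S ∪ Sp with hWAdef
  set KA : SimpleGraph V := restrict G' WA with hKAdef
  have hqWA : q ∉ WA := by
    intro hq
    rcases hq with hq | hq
    · exact mside_disjoint hS' q hq hqB
    · rcases hq with hq | hq
      · exact hpqne hq.symm
      · exact hqS hq
  -- `Sp` is an (A,B)-separator of Γ
  have sep_insert : IsSep Γ A B Sp := by
    intro a ha b hb w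
    by_contra hno
    push_neg at hno
    have hpw : p ∉ w.support := hno p (by simp [hSpdef])
    have hew : s(p, q) ∉ w.edges := fun he => hpw (w.fst_mem_support_of_mem_edges he)
    obtain ⟨s, hs, hsw⟩ := hS' a ha b hb (w.transfer G' (hGG' w hew))
    rw [Walk.support_transfer] at hsw
    exact hno s (by simp [hSpdef, hs]) hsw
  have hSpcard : Sp.ncard = k := by
    have h1 : k ≤ Sp.ncard := hk Sp sep_insert
    have h2 : Sp.ncard ≤ S.ncard + 1 := Set.ncard_insert_le p S
    omega
  -- the key separator transfer
  have claim : ∀ T : Set V, IsSep KA A Sp T → IsSep Γ A B T := by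
    intro T hT a ha b hb w
    set W := w.bypass with hWdef
    have hWpath : W.IsPath := w.bypass_isPath
    obtain ⟨s₀, hs₀, R, Rrest, happ, honly⟩ :=
      exists_prefix Sp W (sep_insert a ha b hb W)
    have hRpath : R.IsPath := isPath_of_append_left happ hWpath
    have hRsub : ∀ z ∈ R.support, z ∈ W.support := by
      intro z hz; rw [← happ, Walk.mem_support_append_iff]; exact Or.inl hz
    -- the deleted edge is not on R
    have heR : s(p, q) ∉ R.edges := by
      intro he
      have hpsup : p ∈ R.support := R.fst_mem_support_of_mem_edges he
      have hqsup : q ∈ R.support := R.snd_mem_support_of_mem_edges he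
      have hps₀ : p = s₀ := honly p hpsup (by simp [hSpdef])
      obtain ⟨q', hq', R₁, R₂, happ₁, honly₁⟩ :=
        exists_prefix {q} R ⟨q, rfl, hqsup⟩
      have hq'' : q' = q := hq'
      have hpq'ne : p ≠ q' := by rw [hq'']; exact hpqne
      have hpR₂ : p ∈ R₂.support := hps₀ ▸ R₂.end_mem_support
      have hpR₁ : p ∉ R₁.support :=
        not_mem_left_of_append happ₁ hRpath hpR₂ hpq'ne
      have heR₁ : s(p, q) ∉ R₁.edges := fun he' =>
        hpR₁ (R₁.fst_mem_support_of_mem_edges he')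
      have hqA : q' ∈ mside G' A S := by
        refine ⟨a, ha, R₁.transfer G' (hGG' R₁ heR₁), ?_⟩
        intro z hz
        rw [Walk.support_transfer] at hz
        intro hzS
        have hzR : z ∈ R.support := by
          rw [← happ₁, Walk.mem_support_append_iff]; exact Or.inl hz
        have : z = s₀ := honly z hzR (by simp [hSpdef, hzS])
        rw [this, ← hps₀] at hz
        exact hpR₁ hz
      rw [hq''] at hqA
      exact mside_disjoint hS' q hqA hqB
    obtain ⟨Rt, hRtsup, hRtedges⟩ :
        ∃ Rt : G'.Walk a s₀, Rt.support = R.support ∧ Rt.edges = R.edges :=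
      ⟨R.transfer G' (hGG' R heR), Walk.support_transfer _ _, Walk.edges_transfer _ _⟩
    -- all support vertices of R lie in WA
    have hall : ∀ z ∈ R.support, z ∈ mside G' A S ∨ z = s₀ := by
      have hstart : a ∈ mside G' A S ∨ a = s₀ := by
        by_cases haSp : a ∈ Sp
        · exact Or.inr (honly a R.start_mem_support haSp)
        · exact Or.inl (mem_mside_self ha (fun hS => haSp (by simp [hSpdef, hS])))
      have := side_walk (G' := G') (A := A) (S := S) (P := Sp)
        (fun z hz => by simp [hSpdef, hz]) Rt
        (by rw [Walk.isPath_def] at hRpath; rw [hRtsup]; exact hRpath)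
        (by rw [hRtsup]; exact honly) hstart
      intro z hz; exact this z (by rw [hRtsup]; exact hz)
    have hallWA : ∀ z ∈ Rt.support, z ∈ WA := by
      intro z hz
      rw [hRtsup] at hz
      rcases hall z hz with h | rfl
      · exact Or.inl h
      · exact Or.inr hs₀
    have hKAedges : ∀ e ∈ Rt.edges, e ∈ KA.edgeSet := by
      intro e he
      induction e using Sym2.ind with
      | _ c d =>
        have hadj : G'.Adj c d := Rt.adj_of_mem_edges he
        have hc : c ∈ WA := hallWA c (Rt.fst_mem_support_of_mem_edges he)
        have hd : d ∈ WA := hallWA d (Rt.snd_mem_support_of_mem_edges he)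
        exact (mem_edgeSet KA).2 ⟨hadj, hc, hd⟩
    obtain ⟨RK, hRKsup⟩ : ∃ RK : KA.Walk a s₀, RK.support = Rt.support :=
      ⟨Rt.transfer KA hKAedges, Walk.support_transfer _ _⟩
    obtain ⟨t, ht, htsup⟩ := hT a ha s₀ hs₀ RK
    rw [hRKsup, hRtsup] at htsup
    exact ⟨t, ht, (Walk.support_bypass_subset w) (hRsub t htsup)⟩
  -- apply the induction hypothesis to K_A
  have hKAcard : KA.edgeSet.ncard < Γ.edgeSet.ncard :=
    lt_of_le_of_lt (Set.ncard_le_ncard (edgeSet_mono (restrict_le G' WA))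
      (Set.toFinite _)) hcard
  obtain ⟨a, f₀, w₀, haA, hf₀, hw₀p, hw₀d⟩ :=
    IH KA hKAcard A Sp k (fun T hT => hk T (claim T hT))
  -- truncate each path at its first meeting with Sp
  have htrunc : ∀ i, ∃ s ∈ Sp, ∃ (qq : KA.Walk (a i) s) (rr : KA.Walk s (f₀ i)),
      qq.append rr = w₀ i ∧ ∀ z ∈ qq.support, z ∈ Sp → z = s :=
    fun i => exists_prefix Sp (w₀ i) ⟨f₀ i, hf₀ i, (w₀ i).end_mem_support⟩
  choose f hfSp qq rr happ honly using htrunc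
  have hqqsub : ∀ i, ∀ z ∈ (qq i).support, z ∈ (w₀ i).support := by
    intro i z hz
    rw [← happ i, Walk.mem_support_append_iff]; exact Or.inl hz
  have hqqpath : ∀ i, (qq i).IsPath := fun i => isPath_of_append_left (happ i) (hw₀p i)
  have haWA : ∀ i, a i ∈ WA := by
    intro i
    by_cases h : a i ∈ S
    · exact Or.inr (Or.inr h)
    · exact Or.inl (mem_mside_self (haA i) h)
  have hKAleΓ : KA ≤ Γ := le_trans (restrict_le G' WA) hle
  refine ⟨a, f, fun i => ((qq i).transfer Γ
    (fun e he => edgeSet_mono hKAleΓ ((qq i).edges_subset_edgeSet he))),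
    haA, hfSp, ?_, ?_, ?_, ?_, ?_, ?_⟩
  · intro i
    rw [Walk.isPath_def, Walk.support_transfer]
    exact (hqqpath i).support_nodup
  · intro i j hij z hz
    rw [Walk.support_transfer] at hz ⊢
    exact fun hz' => hw₀d i j hij z (hqqsub i z hz) (hqqsub j z hz')
  · intro i z hz
    rw [Walk.support_transfer] at hz
    exact restrict_support (qq i) (haWA i) z hz
  · intro i z hz
    rw [Walk.support_transfer] at hz
    exact honly i z hz
  · intro i j hfij
    by_contra hij
    have h2 : f i ∈ (w₀ j).support := by
      rw [hfij]; exact hqqsub j _ ((qq j).end_mem_support)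
    exact hw₀d i j hij (f i) (hqqsub i _ ((qq i).end_mem_support)) h2
  · -- surjectivity onto Sp
    have hinj : Function.Injective (fun i : Fin k => (⟨f i, hfSp i⟩ : ↥Sp)) := by
      intro i j hij
      by_contra hij'
      have : f i = f j := congrArg Subtype.val hij
      have h2 : f i ∈ (w₀ j).support := by
        rw [this]; exact hqqsub j _ ((qq j).end_mem_support)
      exact hw₀d i j hij' (f i) (hqqsub i _ ((qq i).end_mem_support)) h2
    have : Fintype ↥Sp := Fintype.ofFinite _
    have hcardSp : Fintype.card ↥Sp = k := by
      rw [← Set.toFinset_card, ← Set.ncard_eq_toFinset_card']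
      exact hSpcard
    have hbij := (Fintype.bijective_iff_injective_and_card
      (fun i : Fin k => (⟨f i, hfSp i⟩ : ↥Sp))).2 ⟨hinj, by simp [hcardSp]⟩
    intro s hs
    obtain ⟨i, hi⟩ := hbij.2 ⟨s, hs⟩
    exact ⟨i, congrArg Subtype.val hi⟩

theorem menger [Finite V] : ∀ (n : ℕ) (Γ : SimpleGraph V), Γ.edgeSet.ncard ≤ n →
    ∀ A B : Set V, ∀ k : ℕ, (∀ T, IsSep Γ A B T → k ≤ T.ncard) → PathSys Γ A B k := by
  intro n
  induction n with
  | zero =>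
    intro Γ hn A B k hk
    have hE : Γ.edgeSet = ∅ := by
      rw [← Set.ncard_eq_zero (Set.toFinite Γ.edgeSet)]
      omega
    exact menger_base hE A B k hk
  | succ n IH =>
    intro Γ hn A B k hk
    classical
    by_cases hE : Γ.edgeSet = ∅
    · exact menger_base hE A B k hk
    obtain ⟨e, he⟩ := Set.nonempty_iff_ne_empty.2 hE
    induction e using Sym2.ind with
    | _ p q =>
    have hpq : Γ.Adj p q := (mem_edgeSet Γ).1 he
    set G' : SimpleGraph V := Γ.deleteEdges {s(p, q)} with hG'def
    have hle : G' ≤ Γ := Γ.deleteEdges_le _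
    have hedge : G'.edgeSet = Γ.edgeSet \ {s(p, q)} := Γ.edgeSet_deleteEdges _
    have hGG' : ∀ {c d : V} (w : Γ.Walk c d), s(p, q) ∉ w.edges →
        ∀ e' ∈ w.edges, e' ∈ G'.edgeSet := by
      intro c d w hw e' he'
      rw [hedge]
      refine ⟨w.edges_subset_edgeSet he', ?_⟩
      intro hmem
      rw [Set.mem_singleton_iff] at hmem
      exact hw (hmem ▸ he')
    have hcard : G'.edgeSet.ncard < Γ.edgeSet.ncard := by
      rw [hedge]
      exact Set.ncard_diff_singleton_lt_of_mem he (Set.toFinite _)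
    by_cases hc : ∀ T, IsSep G' A B T → k ≤ T.ncard
    · exact pathSys_of_le hle (IH G' (by omega) A B k hc)
    push_neg at hc
    obtain ⟨S, hS', hScard⟩ := hc
    have hnotsep : ¬ IsSep Γ A B S := fun h => absurd (hk S h) (by omega)
    rw [IsSep] at hnotsep
    push_neg at hnotsep
    obtain ⟨a₀, ha₀, b₀, hb₀, W₀, hW₀⟩ := hnotsep
    set W := W₀.bypass with hWdef
    have hWsub := W₀.support_bypass_subset
    have hWavoid : ∀ z ∈ W.support, z ∉ S := fun z hz hzS => (hW₀ z hzS) (hWsub hz)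
    have heW : s(p, q) ∈ W.edges := by
      by_contra hew
      obtain ⟨s, hs, hsup⟩ := hS' a₀ ha₀ b₀ hb₀ (W.transfer G' (hGG' W hew))
      rw [Walk.support_transfer] at hsup
      exact (hWavoid s hsup) hs
    have hpW : p ∈ W.support := W.fst_mem_support_of_mem_edges heW
    have hqW : q ∈ W.support := W.snd_mem_support_of_mem_edges heW
    obtain ⟨w₀, hw₀pq, R₁, R₂, happ₁, honly₁⟩ :=
      exists_prefix {p, q} W ⟨p, by simp, hpW⟩
    have hR₁e : s(p, q) ∉ R₁.edges := by
      intro he'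
      have h1 := honly₁ p (R₁.fst_mem_support_of_mem_edges he') (by simp)
      have h2 := honly₁ q (R₁.snd_mem_support_of_mem_edges he') (by simp)
      exact hpq.ne (h1.trans h2.symm)
    have hw₀A : w₀ ∈ mside G' A S := by
      refine ⟨a₀, ha₀, R₁.transfer G' (hGG' R₁ hR₁e), ?_⟩
      intro z hz
      rw [Walk.support_transfer] at hz
      refine hWavoid z ?_
      rw [← happ₁, Walk.mem_support_append_iff]
      exact Or.inl hz
    obtain ⟨w₁, hw₁pq, R₃, R₄, happ₂, honly₂⟩ :=
      exists_prefix {p, q} W.reverse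
        ⟨p, by simp, by rw [Walk.support_reverse, List.mem_reverse]; exact hpW⟩
    have hR₃e : s(p, q) ∉ R₃.edges := by
      intro he'
      have h1 := honly₂ p (R₃.fst_mem_support_of_mem_edges he') (by simp)
      have h2 := honly₂ q (R₃.snd_mem_support_of_mem_edges he') (by simp)
      exact hpq.ne (h1.trans h2.symm)
    have hw₁B : w₁ ∈ mside G' B S := by
      refine ⟨b₀, hb₀, R₃.transfer G' (hGG' R₃ hR₃e), ?_⟩
      intro z hz
      rw [Walk.support_transfer] at hz
      refine hWavoid z ?_
      have : z ∈ W.reverse.support := by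
        rw [← happ₂, Walk.mem_support_append_iff]
        exact Or.inl hz
      rw [Walk.support_reverse, List.mem_reverse] at this
      exact this
    have hww : w₀ ≠ w₁ := by
      intro h
      exact mside_disjoint hS' w₀ hw₀A (h ▸ hw₁B)
    have hw₀pq' : w₀ = p ∨ w₀ = q := by simpa using hw₀pq
    have hw₁pq' : w₁ = p ∨ w₁ = q := by simpa using hw₁pq
    obtain ⟨p', q', hpq', hse, hp'A, hq'B⟩ :
        ∃ p' q', Γ.Adj p' q' ∧ s(p', q') = s(p, q) ∧
          p' ∈ mside G' A S ∧ q' ∈ mside G' B S := by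
      rcases hw₀pq' with rfl | rfl <;> rcases hw₁pq' with rfl | rfl
      · exact absurd rfl hww
      · exact ⟨w₀, w₁, hpq, rfl, hw₀A, hw₁B⟩
      · exact ⟨w₀, w₁, hpq.symm, Sym2.eq_swap, hw₀A, hw₁B⟩
      · exact absurd rfl hww
    have hGGp : ∀ {c d : V} (w : Γ.Walk c d), s(p', q') ∉ w.edges →
        ∀ e' ∈ w.edges, e' ∈ G'.edgeSet := by
      intro c d w hw
      exact hGG' w (by rwa [← hse])
    have hGGq : ∀ {c d : V} (w : Γ.Walk c d), s(q', p') ∉ w.edges →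
        ∀ e' ∈ w.edges, e' ∈ G'.edgeSet := by
      intro c d w hw
      exact hGGp w (by rwa [← Sym2.eq_swap])
    have IH' : ∀ Γ' : SimpleGraph V, Γ'.edgeSet.ncard < Γ.edgeSet.ncard →
        ∀ A' B' : Set V, ∀ k', (∀ T, IsSep Γ' A' B' T → k' ≤ T.ncard) →
          PathSys Γ' A' B' k' := by
      intro Γ' hΓ' A' B' k' hk'
      exact IH Γ' (by omega) A' B' k' hk'
    obtain ⟨a, f, wA, haA, hfSp, hwApath, hwAdisj, hwAsub, hwAonly, hfinj, hfsurj⟩ :=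
      menger_half hle hpq' hGGp hS' hScard hk hp'A hq'B IH' hcard
    obtain ⟨bB, g, wB, hbB, hgSq, hwBpath, hwBdisj, hwBsub, hwBonly, hginj, hgsurj⟩ :=
      menger_half hle hpq'.symm hGGq (isSep_symm hS') hScard
        (fun T hT => hk T (isSep_symm hT)) hq'B hp'A IH' hcard
    -- gluing
    have hp'S : p' ∉ S := mside_not_mem_S hp'A
    have hq'S : q' ∉ S := mside_not_mem_S hq'B
    have cross : ∀ z, z ∈ mside G' A S ∪ insert p' S →
        z ∈ mside G' B S ∪ insert q' S → z ∈ S := by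
      intro z hz1 hz2
      rcases hz1 with hz1 | hz1
      · exfalso
        rcases hz2 with hz2 | hz2
        · exact mside_disjoint hS' z hz1 hz2
        · rcases hz2 with rfl | hz2
          · exact mside_disjoint hS' z hz1 hq'B
          · exact mside_not_mem_S hz1 hz2
      · rcases hz1 with rfl | hz1
        · exfalso
          rcases hz2 with hz2 | hz2
          · exact mside_disjoint hS' z hp'A hz2
          · rcases hz2 with h | h
            · exact hpq'.ne (h ▸ rfl)
            · exact hp'S h
        · exact hz1
    set t : Fin k → V := fun i => if f i = p' then q' else f i with htdef
    have ht_mem : ∀ i, t i ∈ insert q' S := by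
      intro i
      rw [htdef]
      by_cases hfi : f i = p'
      · simp [hfi]
      · simp only [if_neg hfi]
        rcases hfSp i with h | h
        · exact absurd h hfi
        · exact Or.inr h
    have tinj : Function.Injective t := by
      intro i i₂ h
      rw [htdef] at h
      by_cases h1 : f i = p' <;> by_cases h2 : f i₂ = p'
      · exact hfinj (h1.trans h2.symm)
      · simp only [if_pos h1, if_neg h2] at h
        exfalso
        rcases hfSp i₂ with h' | h'
        · exact h2 h'
        · exact hq'S (h ▸ h')
      · simp only [if_neg h1, if_pos h2] at h
        exfalso
        rcases hfSp i with h' | h'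
        · exact h1 h'
        · exact hq'S (h.symm ▸ h')
      · simp only [if_neg h1, if_neg h2] at h
        exact hfinj h
    have hjex : ∀ i, ∃ i', g i' = t i := fun i => hgsurj (t i) (ht_mem i)
    choose j hj using hjex
    have jinj : Function.Injective j := by
      intro i i₂ h
      apply tinj
      rw [← hj i, ← hj i₂, h]
    have hwBstart : ∀ i z, z ∈ (wB (j i)).support → z ∈ insert q' S → z = t i := by
      intro i z hz hz'
      rw [← hj i]
      exact hwBonly (j i) z hz hz'
    have glue : ∀ i, ∃ (c : V) (gw : Γ.Walk (a i) c), c ∈ B ∧ gw.IsPath ∧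
        ∀ z ∈ gw.support, z ∈ (wA i).support ∨ z ∈ (wB (j i)).support := by
      intro i
      have hnodupB : (wB (j i)).support.Nodup := (hwBpath (j i)).support_nodup
      by_cases hfi : f i = p'
      · have hgq : g (j i) = q' := by rw [hj i, htdef]; simp [hfi]
        set rr : Γ.Walk q' (bB (j i)) := ((wB (j i)).reverse).copy hgq rfl with hrrdef
        have hrrsup : rr.support = (wB (j i)).support.reverse := by
          rw [hrrdef, Walk.support_copy, Walk.support_reverse]
        have hrrpath : rr.IsPath := by
          rw [hrrdef, Walk.isPath_copy]
          exact (hwBpath (j i)).reverse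
        have hp'rr : p' ∉ rr.support := by
          rw [hrrsup, List.mem_reverse]
          intro hmem
          rcases hwBsub (j i) p' hmem with h | h
          · exact mside_disjoint hS' p' hp'A h
          · rcases h with h | h
            · exact hpq'.ne h
            · exact hp'S h
        refine ⟨bB (j i), ((wA i).copy rfl hfi).append (Walk.cons hpq' rr),
          hbB (j i), ?_, ?_⟩
        · rw [Walk.isPath_def, Walk.support_append, Walk.support_copy]
          refine List.Nodup.append (hwApath i).support_nodup ?_ ?_
          · rw [Walk.support_cons]
            simpa using hrrpath.support_nodup
          · intro z hz hz'
            rw [Walk.support_cons] at hz'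
            simp only [List.tail_cons] at hz'
            have hzB : z ∈ (wB (j i)).support := by
              rw [← List.mem_reverse, ← hrrsup]; exact hz'
            have hzS : z ∈ S := cross z (hwAsub i z hz) (hwBsub (j i) z hzB)
            have : z = f i := hwAonly i z hz (Or.inr hzS)
            rw [this, hfi] at hzS
            exact hp'S hzS
        · intro z hz
          rw [Walk.support_append, Walk.support_copy, List.mem_append] at hz
          rcases hz with hz | hz
          · exact Or.inl hz
          · rw [Walk.support_cons, List.tail_cons, hrrsup, List.mem_reverse] at hz
            exact Or.inr hz
      · have hfS : f i ∈ S := by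
          rcases hfSp i with h | h
          · exact absurd h hfi
          · exact h
        have hgq : g (j i) = f i := by rw [hj i, htdef]; simp [hfi]
        set rr : Γ.Walk (f i) (bB (j i)) := ((wB (j i)).reverse).copy hgq rfl with hrrdef
        have hrrsup : rr.support = (wB (j i)).support.reverse := by
          rw [hrrdef, Walk.support_copy, Walk.support_reverse]
        have hrrpath : rr.IsPath := by
          rw [hrrdef, Walk.isPath_copy]
          exact (hwBpath (j i)).reverse
        refine ⟨bB (j i), (wA i).append rr, hbB (j i), ?_, ?_⟩
        · rw [Walk.isPath_def, Walk.support_append]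
          refine List.Nodup.append (hwApath i).support_nodup
            (hrrpath.support_nodup.sublist (List.tail_sublist _)) ?_
          intro z hz hz'
          have hztail : z ∈ rr.support.tail := hz'
          have hzrr : z ∈ rr.support := List.mem_of_mem_tail hz'
          have hzB : z ∈ (wB (j i)).support := by
            rw [← List.mem_reverse, ← hrrsup]; exact hzrr
          have hzS : z ∈ S := cross z (hwAsub i z hz) (hwBsub (j i) z hzB)
          have hzf : z = f i := hwAonly i z hz (Or.inr hzS)
          -- but f i is the head of rr.support, so it is not in the tail
          have hne2 : f i ∉ rr.support.tail := by
            have h := hrrpath.support_nodup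
            rw [rr.support_eq_cons, List.nodup_cons] at h
            exact h.1
          exact hne2 (hzf ▸ hztail)
        · intro z hz
          rw [Walk.support_append, List.mem_append] at hz
          rcases hz with hz | hz
          · exact Or.inl hz
          · have : z ∈ rr.support := List.mem_of_mem_tail hz
            rw [hrrsup, List.mem_reverse] at this
            exact Or.inr this
    choose c gw hcB hgwpath hgwsub using glue
    refine ⟨a, c, gw, haA, hcB, hgwpath, ?_⟩
    intro i i₂ hne z hz hz₂
    rcases hgwsub i z hz with hzA | hzB <;> rcases hgwsub i₂ z hz₂ with hzA₂ | hzB₂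
    · exact hwAdisj i i₂ hne z hzA hzA₂
    · have hzS : z ∈ S := cross z (hwAsub i z hzA) (hwBsub (j i₂) z hzB₂)
      have h1 : z = f i := hwAonly i z hzA (Or.inr hzS)
      have h2 : z = t i₂ := hwBstart i₂ z hzB₂ (Or.inr hzS)
      have hfi₂ : f i₂ ≠ p' → t i₂ = f i₂ := by intro h; rw [htdef]; simp [h]
      by_cases hcase : f i₂ = p'
      · have : t i₂ = q' := by rw [htdef]; simp [hcase]
        rw [this] at h2
        exact hq'S (h2 ▸ hzS)
      · rw [hfi₂ hcase] at h2
        exact hne (hfinj (h1.symm.trans h2))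
    · have hzS : z ∈ S := cross z (hwAsub i₂ z hzA₂) (hwBsub (j i) z hzB)
      have h1 : z = f i₂ := hwAonly i₂ z hzA₂ (Or.inr hzS)
      have h2 : z = t i := hwBstart i z hzB (Or.inr hzS)
      by_cases hcase : f i = p'
      · have : t i = q' := by rw [htdef]; simp [hcase]
        rw [this] at h2
        exact hq'S (h2 ▸ hzS)
      · have : t i = f i := by rw [htdef]; simp [hcase]
        rw [this] at h2
        exact hne (hfinj (h2.symm.trans h1))
    · exact hwBdisj (j i) (j i₂) (fun h => hne (jinj h)) z hzB hzB₂


lemma walk_decomp {G : SimpleGraph V} {x y : V} (w : G.Walk x y) (hpath : w.IsPath)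
    (hxy : x ≠ y) (hnadj : ¬G.Adj x y) :
    ∃ (c d : V) (_ : G.Adj x c) (_ : G.Adj d y) (M : G.Walk c d),
      (∀ z ∈ M.support, z ∈ w.support) ∧ x ∉ M.support ∧ y ∉ M.support := by
  cases w with
  | nil => exact absurd rfl hxy
  | @cons _ c _ h1 Ω1 =>
    cases Ω1 with
    | nil => exact absurd h1 hnadj
    | @cons _ c2 _ h1b Ω1b =>
      obtain ⟨d, q, h2, heq⟩ := Walk.exists_cons_eq_concat h1b Ω1b
      have hsup : (Walk.cons h1b Ω1b).support = q.support ++ [y] := by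
        rw [heq, Walk.concat_eq_append, Walk.support_append]
        simp
      have hnodup := hpath.support_nodup
      rw [Walk.support_cons, hsup] at hnodup
      rw [List.nodup_cons] at hnodup
      have hxq : x ∉ q.support := fun h => hnodup.1 (List.mem_append_left _ h)
      have hyq : y ∉ q.support := fun h =>
        (List.disjoint_of_nodup_append hnodup.2) h (by simp)
      refine ⟨c, d, h1, h2, q, ?_, hxq, hyq⟩
      intro z hz
      rw [Walk.support_cons, hsup]
      exact List.mem_cons_of_mem _ (List.mem_append_left _ hz)

lemma induce_walk_out {G : SimpleGraph V} {s : Set V} {a b : ↥s}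
    (w : (SimpleGraph.induce s G).Walk a b) :
    ∃ w' : G.Walk a.1 b.1, ∀ z ∈ w'.support, z ∈ s := by
  induction w with
  | nil => exact ⟨Walk.nil, by simp⟩
  | @cons c d e hadj p ih =>
    obtain ⟨w', hw'⟩ := ih
    refine ⟨Walk.cons (show G.Adj c.1 d.1 from hadj) w', ?_⟩
    intro z hz
    rw [Walk.support_cons, List.mem_cons] at hz
    rcases hz with rfl | hz
    · exact c.2
    · exact hw' z hz


/-- Two walks with the same endpoints are internally vertex-disjoint. -/
def IntDisjoint {G : SimpleGraph V} {x y : V} (p q : G.Walk x y) : Prop :=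
  ∀ v ∈ p.support, v ∈ q.support → v = x ∨ v = y

/-- There are `k` pairwise internally vertex-disjoint `x`-`y` paths in `G`. -/
def ConnK (G : SimpleGraph V) (k : ℕ) (x y : V) : Prop :=
  ∃ P : Fin k → G.Walk x y, (∀ i, (P i).IsPath) ∧
    ∀ i j, i ≠ j → IntDisjoint (P i) (P j)

/-- `G` is `(Q,r)`-vertex-connected. -/
def QRConn (G : SimpleGraph V) (Q : Set V) (r : V → ℕ) : Prop :=
  ∀ x ∈ Q, ∀ y ∈ Q, x ≠ y → ConnK G (min (r x) (r y)) x y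

/-- Delete a vertex (isolate it). -/
def delV (G : SimpleGraph V) (v : V) : SimpleGraph V where
  Adj a b := G.Adj a b ∧ a ≠ v ∧ b ≠ v
  symm := ⟨by intro a b h; exact ⟨h.1.symm, h.2.2, h.2.1⟩⟩
  loopless := ⟨by intro a h; exact G.ne_of_adj h.1 rfl⟩

/-- `G` is minimally `(Q,r)`-vertex-connected: it is `(Q,r)`-vertex-connected but
deleting any edge or any vertex destroys this property. -/
def MinQR (G : SimpleGraph V) (Q : Set V) (r : V → ℕ) : Prop :=
  QRConn G Q r ∧ (∀ e ∈ G.edgeSet, ¬ QRConn (G.deleteEdges {e}) Q r) ∧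
    ∀ v : V, ¬ QRConn (delV G v) Q r

/-- Biconnected: at least 3 vertices, connected, and no cut vertex. -/
def Biconnected (G : SimpleGraph V) : Prop :=
  3 ≤ Nat.card V ∧ G.Connected ∧ ∀ v : V, (SimpleGraph.induce {w | w ≠ v} G).Connected

/-- Three-vertex-connected: more than 3 vertices and removing any at most 2
vertices leaves the graph connected. -/
def ThreeConnected (G : SimpleGraph V) : Prop :=
  4 ≤ Nat.card V ∧ ∀ s : Set V, s.ncard ≤ 2 → (SimpleGraph.induce sᶜ G).Connected

/-- Degree of a vertex. -/
noncomputable def vdeg (G : SimpleGraph V) (v : V) : ℕ := (G.neighborSet v).ncard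

/-- The contracted version of `G`: suppress all degree-2 vertices.  Two vertices of
degree `≠ 2` are adjacent iff they are joined by a path all of whose internal
vertices have degree 2. -/
def suppress (G : SimpleGraph V) : SimpleGraph {v : V // vdeg G v ≠ 2} where
  Adj u v := u ≠ v ∧ ∃ p : G.Walk u.1 v.1, p.IsPath ∧
      ∀ w ∈ p.support, w ≠ u.1 → w ≠ v.1 → vdeg G w = 2
  symm := ⟨by
    rintro u v ⟨hne, p, hp, hint⟩
    refine ⟨hne.symm, p.reverse, hp.reverse, ?_⟩
    intro w hw h1 h2
    rw [SimpleGraph.Walk.support_reverse, List.mem_reverse] at hw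
    exact hint w hw h2 h1⟩
  loopless := ⟨by intro u h; exact h.1 rfl⟩

/-- The removal operation of Holton–Jackson–Saito–Wormald: delete the edge `uv`,
suppress any resulting degree-2 vertices and simplify parallel edges; the edge is
removable when the result is three-connected. -/
def Removable (G : SimpleGraph V) (u v : V) : Prop :=
  ThreeConnected (suppress (G.deleteEdges {s(u, v)}))

lemma connK_of_adj {G : SimpleGraph V} {x y : V} (h : G.Adj x y) (k : ℕ) :
    ConnK G k x y := by
  refine ⟨fun _ => Walk.cons h Walk.nil, fun i => ?_, fun i j _ => ?_⟩
  · rw [Walk.isPath_def]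
    simp [h.ne]
  · intro z hz _
    simp only [Walk.support_cons, Walk.support_nil, List.mem_cons,
      List.not_mem_nil, or_false, List.mem_singleton] at hz
    tauto

lemma delV_walk {G : SimpleGraph V} {x y a b : V} (w : G.Walk a b)
    (h : ∀ z ∈ w.support, z ≠ x ∧ z ≠ y) :
    ∃ w' : (delV (delV G x) y).Walk a b, w'.support = w.support := by
  induction w with
  | nil => exact ⟨Walk.nil, rfl⟩
  | @cons c d e hadj p ih =>
    obtain ⟨w', hw'⟩ := ih (fun z hz => h z (by simp [Walk.support_cons, hz]))
    have hc := h c (by simp [Walk.support_cons])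
    have hd := h d (by simp [Walk.support_cons])
    exact ⟨Walk.cons ⟨⟨hadj, hc.1, hd.1⟩, hc.2, hd.2⟩ w', by
      exact congrArg (List.cons c) hw'⟩

lemma delV_walk_support {G : SimpleGraph V} {x y a b : V}
    (w : (delV (delV G x) y).Walk a b) (ha : a ≠ x ∧ a ≠ y) :
    ∀ z ∈ w.support, z ≠ x ∧ z ≠ y := by
  induction w with
  | nil => intro z hz; simp only [Walk.support_nil, List.mem_singleton] at hz; subst hz; exact ha
  | @cons c d e hadj p ih =>
    intro z hz
    simp only [Walk.support_cons, List.mem_cons] at hz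
    rcases hz with rfl | hz
    · exact ha
    · exact ih ⟨hadj.1.2.2, hadj.2.2⟩ z hz

lemma delV_le {G : SimpleGraph V} {x y : V} : delV (delV G x) y ≤ G :=
  fun _ _ h => h.1.1

/-- From three-connectedness in the cut sense, extract three internally disjoint
paths between any two non-adjacent vertices. -/
lemma three_paths_of_threeconn {V' : Type u} [Finite V'] {Gs : SimpleGraph V'}
    (hconn : ∀ s : Set V', s.ncard ≤ 2 → (SimpleGraph.induce sᶜ Gs).Connected)
    {x y : V'} (hxy : x ≠ y) (hnadj : ¬ Gs.Adj x y) : ConnK Gs 3 x y := by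
  classical
  set G₀ : SimpleGraph V' := delV (delV Gs x) y with hG₀def
  set A : Set V' := Gs.neighborSet x with hAdef
  set B : Set V' := Gs.neighborSet y with hBdef
  have hsepbound : ∀ T : Set V', IsSep G₀ A B T → 3 ≤ T.ncard := by
    intro T hT
    by_contra hlt
    push_neg at hlt
    have hscard : (T \ {x, y}).ncard ≤ 2 := by
      have := Set.ncard_le_ncard (Set.diff_subset (s := T) (t := {x, y}))
        (Set.toFinite T)
      omega
    have hxs : x ∈ (T \ {x, y})ᶜ := by simp
    have hys : y ∈ (T \ {x, y})ᶜ := by simp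
    obtain ⟨ω⟩ := (hconn _ hscard).preconnected ⟨x, hxs⟩ ⟨y, hys⟩
    obtain ⟨ω₀, hω₀avoid⟩ := induce_walk_out ω
    have hω'avoid : ∀ z ∈ (ω₀.copy rfl rfl : Gs.Walk x y).support, z ∈ (T \ {x, y})ᶜ := by
      intro z hz
      rw [Walk.support_copy] at hz
      exact hω₀avoid z hz
    set ω' : Gs.Walk x y := ω₀.copy rfl rfl with hω'def
    have hΩpath : ω'.bypass.IsPath := ω'.bypass_isPath
    have hΩavoid : ∀ z ∈ ω'.bypass.support, z ∉ T \ {x, y} := fun z hz h =>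
      (hω'avoid z (ω'.support_bypass_subset hz)) h
    obtain ⟨c, d, h1, h2, M, hMsub, hxM, hyM⟩ :=
      walk_decomp ω'.bypass hΩpath hxy hnadj
    obtain ⟨M', hM'⟩ := delV_walk (x := x) (y := y) M (fun z hz =>
      ⟨fun h => hxM (by rw [← h]; exact hz), fun h => hyM (by rw [← h]; exact hz)⟩)
    have hcA : c ∈ A := h1
    have hdB : d ∈ B := h2.symm
    obtain ⟨tt, htT, htsup⟩ := hT c hcA d hdB M'
    rw [hM'] at htsup
    have h1' := hΩavoid tt (hMsub tt htsup)
    have h2x : tt ≠ x := fun h => hxM (by rw [← h]; exact htsup)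
    have h2y : tt ≠ y := fun h => hyM (by rw [← h]; exact htsup)
    exact h1' ⟨htT, by simp [h2x, h2y]⟩
  obtain ⟨a, b, pw, haA, hbB, hppath, hpdisj⟩ :=
    menger G₀.edgeSet.ncard G₀ le_rfl A B 3 hsepbound
  have havoid : ∀ i, ∀ z ∈ (pw i).support, z ≠ x ∧ z ≠ y := by
    intro i
    refine delV_walk_support (pw i) ⟨(haA i).ne', ?_⟩
    intro h
    exact hnadj (h ▸ (haA i))
  have hF : ∀ i : Fin 3, ∃ F : Gs.Walk x y,
      F.support = x :: ((pw i).support ++ [y]) := by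
    intro i
    have hxa : Gs.Adj x (a i) := haA i
    have hby : Gs.Adj (b i) y := (hbB i).symm
    obtain ⟨pGs, hpGs⟩ : ∃ pGs : Gs.Walk (a i) (b i), pGs.support = (pw i).support :=
      ⟨(pw i).transfer Gs (fun e he =>
        edgeSet_mono delV_le ((pw i).edges_subset_edgeSet he)),
        Walk.support_transfer _ _⟩
    refine ⟨Walk.cons hxa (pGs.append (Walk.cons hby Walk.nil)), ?_⟩
    rw [Walk.support_cons, Walk.support_append, hpGs]
    simp
  choose F hFsup using hF
  refine ⟨F, ?_, ?_⟩
  · intro i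
    rw [Walk.isPath_def, hFsup i, List.nodup_cons]
    constructor
    · simp only [List.mem_append, List.mem_singleton]
      rintro (h | rfl)
      · exact ((havoid i) x h).1 rfl
      · exact hxy rfl
    · refine List.Nodup.append (hppath i).support_nodup (by simp) ?_
      intro z hz hz'
      simp only [List.mem_singleton] at hz'
      exact ((havoid i) z hz).2 hz'
  · intro i j hij z hzi hzj
    rw [hFsup i] at hzi
    rw [hFsup j] at hzj
    simp only [List.mem_cons, List.mem_append, List.mem_singleton,
      List.not_mem_nil, or_false] at hzi hzj
    rcases hzi with rfl | hzi | rfl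
    · exact Or.inl rfl
    · rcases hzj with rfl | hzj | rfl
      · exact Or.inl rfl
      · exact absurd hzj (hpdisj i j hij z hzi)
      · exact Or.inr rfl
    · exact Or.inr rfl


lemma classify {G' : SimpleGraph V} {u v a b : V} (hnuv : ¬G'.Adj u v)
    (hdeg2 : ∀ w, vdeg G' w = 2 → w = u ∨ w = v)
    (p : G'.Walk a b) (hp : p.IsPath) (hab : a ≠ b)
    (hint : ∀ w ∈ p.support, w ≠ a → w ≠ b → vdeg G' w = 2) :
    G'.Adj a b ∨ ∃ w, vdeg G' w = 2 ∧ G'.Adj a w ∧ G'.Adj w b := by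
  cases p with
  | nil => exact absurd rfl hab
  | @cons _ c _ h1 p1 =>
    cases p1 with
    | nil => exact Or.inl h1
    | @cons _ d _ h2 p2 =>
      have hnodup := hp.support_nodup
      rw [Walk.support_cons, Walk.support_cons, List.nodup_cons, List.nodup_cons]
        at hnodup
      have hcb : c ≠ b := by
        intro h
        exact hnodup.2.1 (h ▸ p2.end_mem_support)
      have hc2 : vdeg G' c = 2 := by
        refine hint c ?_ h1.ne' hcb
        simp [Walk.support_cons]
      cases p2 with
      | nil => exact Or.inr ⟨c, hc2, h1, h2⟩
      | @cons _ e _ h3 p3 =>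
        exfalso
        have hda : d ≠ a := by
          intro h
          apply hnodup.1
          rw [Walk.support_cons, ← h]
          simp [Walk.support_cons]
        have hdb : d ≠ b := by
          intro h
          rw [Walk.support_cons, List.nodup_cons] at hnodup
          exact hnodup.2.2.1 (h ▸ p3.end_mem_support)
        have hd2 : vdeg G' d = 2 := by
          refine hint d ?_ hda hdb
          simp [Walk.support_cons]
        rcases hdeg2 c hc2 with rfl | rfl <;> rcases hdeg2 d hd2 with rfl | rfl
        · exact h2.ne rfl
        · exact hnuv h2
        · exact hnuv h2.symm
        · exact h2.ne rfl

lemma neighborSet_eq_pair [Finite V] {G' : SimpleGraph V} {w a b : V}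
    (hdeg : vdeg G' w = 2) (h1 : G'.Adj w a) (h2 : G'.Adj w b) (hab : a ≠ b) :
    G'.neighborSet w = {a, b} := by
  have hsub : ({a, b} : Set V) ⊆ G'.neighborSet w := by
    intro z hz
    rcases hz with rfl | hz
    · exact h1
    · rw [Set.mem_singleton_iff] at hz
      exact hz ▸ h2
  have hle : (G'.neighborSet w).ncard ≤ ({a, b} : Set V).ncard := by
    rw [Set.ncard_pair hab]
    rw [vdeg] at hdeg
    omega
  exact ((Set.eq_of_subset_of_ncard_le hsub hle (Set.toFinite _))).symm

section Lift

variable [Finite V] {G' : SimpleGraph V} {u v : V}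

lemma lift_exists (hnuv : ¬G'.Adj u v)
    (hdeg2 : ∀ w, vdeg G' w = 2 → w = u ∨ w = v)
    {a' b' : {w : V // vdeg G' w ≠ 2}} (W : (suppress G').Walk a' b') :
    ∃ T : G'.Walk a'.1 b'.1, ∀ z ∈ T.support,
      (∃ c' ∈ W.support, c'.1 = z) ∨
      (vdeg G' z = 2 ∧ ∃ c' d' : {w : V // vdeg G' w ≠ 2},
        s(c', d') ∈ W.edges ∧ G'.neighborSet z = {c'.1, d'.1}) := by
  induction W with
  | nil =>
    refine ⟨Walk.nil, ?_⟩
    intro z hz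
    rw [Walk.support_nil, List.mem_singleton] at hz
    exact Or.inl ⟨_, by simp, hz.symm⟩
  | @cons a' c' b' hadj W' ih =>
    obtain ⟨hne, p, hp, hint⟩ := id hadj
    have habv : a'.1 ≠ c'.1 := fun h => hne (Subtype.ext h)
    obtain ⟨T', hT'⟩ := ih
    have upgrade : ∀ z, ((∃ e' ∈ W'.support, e'.1 = z) ∨
        (vdeg G' z = 2 ∧ ∃ e' f' : {w : V // vdeg G' w ≠ 2},
          s(e', f') ∈ W'.edges ∧ G'.neighborSet z = {e'.1, f'.1})) →
        ((∃ e' ∈ (Walk.cons hadj W').support, e'.1 = z) ∨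
        (vdeg G' z = 2 ∧ ∃ e' f' : {w : V // vdeg G' w ≠ 2},
          s(e', f') ∈ (Walk.cons hadj W').edges ∧
            G'.neighborSet z = {e'.1, f'.1})) := by
      intro z hz
      rcases hz with ⟨e', he', rfl⟩ | ⟨h2, e', f', hef, hN⟩
      · exact Or.inl ⟨e', by simp [Walk.support_cons, he'], rfl⟩
      · exact Or.inr ⟨h2, e', f', by simp [Walk.edges_cons, hef], hN⟩
    rcases classify hnuv hdeg2 p hp habv hint with hdir | ⟨w, hw2, hwa, hwb⟩
    · refine ⟨Walk.cons hdir T', ?_⟩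
      intro z hz
      rw [Walk.support_cons, List.mem_cons] at hz
      rcases hz with rfl | hz
      · exact Or.inl ⟨a', by simp [Walk.support_cons], rfl⟩
      · exact upgrade z (hT' z hz)
    · refine ⟨Walk.cons hwa (Walk.cons hwb T'), ?_⟩
      intro z hz
      rw [Walk.support_cons, Walk.support_cons, List.mem_cons, List.mem_cons] at hz
      rcases hz with rfl | rfl | hz
      · exact Or.inl ⟨a', by simp [Walk.support_cons], rfl⟩
      · refine Or.inr ⟨hw2, a', c', by simp [Walk.edges_cons], ?_⟩
        exact neighborSet_eq_pair hw2 hwa.symm hwb habv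
      · exact upgrade z (hT' z hz)

lemma connK_lift (hnuv : ¬G'.Adj u v)
    (hdeg2 : ∀ w, vdeg G' w = 2 → w = u ∨ w = v)
    {x' y' : {w : V // vdeg G' w ≠ 2}}
    (hcase : ¬∃ w, vdeg G' w = 2 ∧ G'.Adj w x'.1 ∧ G'.Adj w y'.1)
    (hconn : ConnK (suppress G') 3 x' y') : ConnK G' 3 x'.1 y'.1 := by
  classical
  obtain ⟨P, hPpath, hPdisj⟩ := hconn
  have hlift := fun i => lift_exists hnuv hdeg2 (P i)
  choose T hT using hlift
  refine ⟨fun i => (T i).bypass, fun i => (T i).bypass_isPath, ?_⟩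
  intro i j hij z hzi hzj
  have hzi' := hT i z ((T i).support_bypass_subset hzi)
  have hzj' := hT j z ((T j).support_bypass_subset hzj)
  rcases hzi' with ⟨c', hc', rfl⟩ | ⟨h2i, c', d', hcd, hNi⟩
  · rcases hzj' with ⟨e', he', hee⟩ | ⟨h2j, _, _, _, _⟩
    · have : e' = c' := Subtype.ext hee
      subst this
      rcases hPdisj i j hij e' hc' he' with h | h
      · exact Or.inl (by rw [h])
      · exact Or.inr (by rw [h])
    · exact absurd h2j c'.2
  · rcases hzj' with ⟨e', he', hee⟩ | ⟨h2j, e', f', hef, hNj⟩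
    · exact absurd (hee ▸ h2i) e'.2
    · exfalso
      -- two chains through the same suppressed vertex z
      have hcd_adj : (suppress G').Adj c' d' := (P i).adj_of_mem_edges hcd
      have hef_adj : (suppress G').Adj e' f' := (P j).adj_of_mem_edges hef
      have hNeq : ({c'.1, d'.1} : Set V) = {e'.1, f'.1} := by rw [← hNi, ← hNj]
      have hpair : s(c', d') = s(e', f') := by
        have hc : c'.1 ∈ ({e'.1, f'.1} : Set V) := by rw [← hNeq]; simp
        have hd : d'.1 ∈ ({e'.1, f'.1} : Set V) := by rw [← hNeq]; simp
        have hcd_ne : c' ≠ d' := hcd_adj.ne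
        rcases hc with hc | hc <;> rcases hd with hd | hd
        · exact absurd (Subtype.ext ((Subtype.ext hc : c' = e') ▸
            (hd : d'.1 = e'.1))) hcd_ne.symm
        · rw [Set.mem_singleton_iff] at hd
          rw [Sym2.eq_iff]
          exact Or.inl ⟨Subtype.ext hc, Subtype.ext hd⟩
        · rw [Set.mem_singleton_iff] at hc
          rw [Sym2.eq_iff]
          exact Or.inr ⟨Subtype.ext hc, Subtype.ext hd⟩
        · rw [Set.mem_singleton_iff] at hc hd
          exact absurd (Subtype.ext (hc.trans hd.symm)) hcd_ne
      have hcj : c' ∈ (P j).support := (P j).fst_mem_support_of_mem_edges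
        (hpair ▸ hef)
      have hdj : d' ∈ (P j).support := (P j).snd_mem_support_of_mem_edges
        (hpair ▸ hef)
      have hci : c' ∈ (P i).support := (P i).fst_mem_support_of_mem_edges hcd
      have hdi : d' ∈ (P i).support := (P i).snd_mem_support_of_mem_edges hcd
      have hc'xy := hPdisj i j hij c' hci hcj
      have hd'xy := hPdisj i j hij d' hdi hdj
      have hzadj : G'.Adj z x'.1 ∧ G'.Adj z y'.1 := by
        have hcd_ne : c' ≠ d' := hcd_adj.ne
        have hx : x'.1 ∈ G'.neighborSet z ∧ y'.1 ∈ G'.neighborSet z := by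
          rw [hNi]
          rcases hc'xy with rfl | rfl <;> rcases hd'xy with rfl | rfl
          · exact absurd rfl hcd_ne
          · exact ⟨Or.inl rfl, Or.inr rfl⟩
          · exact ⟨Or.inr rfl, Or.inl rfl⟩
          · exact absurd rfl hcd_ne
        exact ⟨hx.1, hx.2⟩
      exact hcase ⟨z, h2i, hzadj.1, hzadj.2⟩

end Lift

lemma intDisjoint_symm {G : SimpleGraph V} {x y : V} {p q : G.Walk x y}
    (h : IntDisjoint p q) : IntDisjoint q p :=
  fun z hz hz' => h z hz' hz

lemma conn3_of_mid {G : SimpleGraph V} {x y w : V} (hw : G.Adj x w) (hw' : G.Adj w y)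
    (hxy : x ≠ y) (pA pB : G.Walk x y) (hA : pA.IsPath) (hB : pB.IsPath)
    (hAB : IntDisjoint pA pB) (hwA : w ∉ pA.support) (hwB : w ∉ pB.support) :
    ConnK G 3 x y := by
  set pm : G.Walk x y := Walk.cons hw (Walk.cons hw' Walk.nil) with hpm
  have hpmsup : pm.support = [x, w, y] := by simp [hpm]
  have hpmpath : pm.IsPath := by
    rw [Walk.isPath_def, hpmsup]
    simp [hw.ne, hxy, hw'.ne]
  have hdm : ∀ (p : G.Walk x y), w ∉ p.support → IntDisjoint pm p := by
    intro p hwp z hz hz'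
    rw [hpmsup] at hz
    simp only [List.mem_cons, List.mem_singleton, List.not_mem_nil,
      or_false] at hz
    rcases hz with rfl | rfl | rfl
    · exact Or.inl rfl
    · exact absurd hz' hwp
    · exact Or.inr rfl
  refine ⟨![pm, pA, pB], ?_, ?_⟩
  · intro i
    fin_cases i
    · exact hpmpath
    · exact hA
    · exact hB
  · intro i j hij
    fin_cases i <;> fin_cases j <;>
      first
        | exact absurd rfl hij
        | exact hdm pA hwA
        | exact hdm pB hwB
        | exact intDisjoint_symm (hdm pA hwA)
        | exact intDisjoint_symm (hdm pB hwB)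
        | exact hAB
        | exact intDisjoint_symm hAB

/-- In a (simple) contracted minimal `Q`-triconnected graph, any edge
neither of whose endpoints is a terminal is nonremovable. -/
theorem stmt_8 (H : SimpleGraph V) (Q : Set V)
    (hmin : MinQR H Q (fun _ => 3)) (hcontracted : ∀ w : V, vdeg H w ≠ 2)
    (u v : V) (huv : H.Adj u v) (hu : u ∉ Q) (hv : v ∉ Q) :
    ¬ Removable H u v := by
  classical
  rintro ⟨hcard4, hconn⟩
  set G' : SimpleGraph V := H.deleteEdges {s(u, v)} with hG'def
  -- finiteness
  have hfinVs : Finite {w : V // vdeg G' w ≠ 2} :=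
    (Nat.card_pos_iff.1 (by omega)).2
  have hns : ∀ w, w ≠ u → w ≠ v → G'.neighborSet w = H.neighborSet w := by
    intro w hwu hwv
    ext z
    simp only [mem_neighborSet, hG'def, SimpleGraph.deleteEdges_adj,
      Set.mem_singleton_iff]
    constructor
    · exact fun h => h.1
    · intro h
      refine ⟨h, ?_⟩
      intro heq
      rw [Sym2.eq_iff] at heq
      rcases heq with ⟨h1, _⟩ | ⟨h2, _⟩
      · exact hwu h1
      · exact hwv h2
  have hvdeg : ∀ w, w ≠ u → w ≠ v → vdeg G' w = vdeg H w := by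
    intro w hwu hwv
    rw [vdeg, vdeg, hns w hwu hwv]
  have hVfin : Finite V := by
    rw [← Set.finite_univ_iff]
    refine Set.Finite.subset
      (((Set.finite_range (fun w : {w : V // vdeg G' w ≠ 2} => w.1)).union
        (Set.toFinite {u, v}))) ?_
    intro w _
    by_cases hw : vdeg G' w ≠ 2
    · exact Or.inl ⟨⟨w, hw⟩, rfl⟩
    · push_neg at hw
      right
      by_contra hc
      simp only [Set.mem_insert_iff, Set.mem_singleton_iff, not_or] at hc
      exact hcontracted w (by rw [← hvdeg w hc.1 hc.2]; rw [hw])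
  -- the pair destroyed by deleting the edge uv
  have hnQR : ¬ QRConn G' Q (fun _ => 3) := hmin.2.1 _ huv
  rw [QRConn] at hnQR
  push_neg at hnQR
  obtain ⟨x, hx, y, hy, hxy, hnK⟩ := hnQR
  simp only [min_self] at hnK
  have hKH : ConnK H 3 x y := by
    have := hmin.1 x hx y hy hxy
    simpa using this
  have hnuv' : ¬ G'.Adj u v := by
    simp [hG'def, SimpleGraph.deleteEdges_adj]
  have hxu : x ≠ u := fun h => hu (h ▸ hx)
  have hxv : x ≠ v := fun h => hv (h ▸ hx)
  have hyu : y ≠ u := fun h => hu (h ▸ hy)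
  have hyv : y ≠ v := fun h => hv (h ▸ hy)
  have hnadjG' : ¬ G'.Adj x y := fun h => hnK (connK_of_adj h 3)
  have hdeg2 : ∀ w, vdeg G' w = 2 → w = u ∨ w = v := by
    intro w h
    by_contra hc
    push_neg at hc
    exact hcontracted w (by rw [← hvdeg w hc.1 hc.2]; rw [h])
  obtain ⟨P, hPpath, hPdisj⟩ := hKH
  by_cases hEall : ∀ i, s(u, v) ∉ (P i).edges
  · -- all three paths survive in G'
    apply hnK
    have htr : ∀ i, ∃ w : G'.Walk x y, w.support = (P i).support := by
      intro i
      refine ⟨(P i).transfer G' ?_, Walk.support_transfer _ _⟩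
      intro e he
      rw [hG'def, edgeSet_deleteEdges, Set.mem_diff]
      refine ⟨(P i).edges_subset_edgeSet he, ?_⟩
      rw [Set.mem_singleton_iff]
      intro heq
      exact hEall i (heq ▸ he)
    choose Pt hPt using htr
    refine ⟨Pt, ?_, ?_⟩
    · intro i
      rw [Walk.isPath_def, hPt i]
      exact (hPpath i).support_nodup
    · intro i j hij z hz hz'
      rw [hPt i] at hz
      rw [hPt j] at hz'
      exact hPdisj i j hij z hz hz'
  push_neg at hEall
  obtain ⟨i₀, hi₀⟩ := hEall
  have hui₀ : u ∈ (P i₀).support := (P i₀).fst_mem_support_of_mem_edges hi₀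
  have hvi₀ : v ∈ (P i₀).support := (P i₀).snd_mem_support_of_mem_edges hi₀
  have hnotuv : ∀ j, j ≠ i₀ → u ∉ (P j).support ∧ v ∉ (P j).support := by
    intro j hj
    constructor
    · intro hmem
      rcases hPdisj i₀ j (fun h => hj h.symm) u hui₀ hmem with h | h
      · exact hxu h.symm
      · exact hyu h.symm
    · intro hmem
      rcases hPdisj i₀ j (fun h => hj h.symm) v hvi₀ hmem with h | h
      · exact hxv h.symm
      · exact hyv h.symm
  have hfin3 : ∀ i : Fin 3, i + 1 ≠ i ∧ i + 2 ≠ i ∧ i + 1 ≠ i + 2 := by decide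
  by_cases hcaseA : ∃ w, vdeg G' w = 2 ∧ G'.Adj w x ∧ G'.Adj w y
  · -- a middle vertex adjacent to both x and y in G'
    obtain ⟨w, hw2, hwx, hwy⟩ := hcaseA
    have hwuv : w = u ∨ w = v := hdeg2 w hw2
    set j₁ := i₀ + 1 with hj₁
    set j₂ := i₀ + 2 with hj₂
    have hj₁i₀ : j₁ ≠ i₀ := (hfin3 i₀).1
    have hj₂i₀ : j₂ ≠ i₀ := (hfin3 i₀).2.1
    have hj₁j₂ : j₁ ≠ j₂ := (hfin3 i₀).2.2
    have htr : ∀ j, j ≠ i₀ → ∃ w : G'.Walk x y, w.support = (P j).support := by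
      intro j hj
      refine ⟨(P j).transfer G' ?_, Walk.support_transfer _ _⟩
      intro e he
      rw [hG'def, edgeSet_deleteEdges, Set.mem_diff]
      refine ⟨(P j).edges_subset_edgeSet he, ?_⟩
      rw [Set.mem_singleton_iff]
      rintro rfl
      exact (hnotuv j hj).1 ((P j).fst_mem_support_of_mem_edges he)
    obtain ⟨pA, hpA⟩ := htr j₁ hj₁i₀
    obtain ⟨pB, hpB⟩ := htr j₂ hj₂i₀
    refine hnK (conn3_of_mid hwx.symm hwy hxy pA pB ?_ ?_ ?_ ?_ ?_)
    · rw [Walk.isPath_def, hpA]; exact (hPpath j₁).support_nodup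
    · rw [Walk.isPath_def, hpB]; exact (hPpath j₂).support_nodup
    · intro z hz hz'
      rw [hpA] at hz
      rw [hpB] at hz'
      exact hPdisj j₁ j₂ hj₁j₂ z hz hz'
    · rw [hpA]
      rcases hwuv with rfl | rfl
      · exact (hnotuv j₁ hj₁i₀).1
      · exact (hnotuv j₁ hj₁i₀).2
    · rw [hpB]
      rcases hwuv with rfl | rfl
      · exact (hnotuv j₂ hj₂i₀).1
      · exact (hnotuv j₂ hj₂i₀).2
  · -- the suppressed graph route
    have hxdeg : vdeg G' x ≠ 2 := by
      rw [hvdeg x hxu hxv]; exact hcontracted x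
    have hydeg : vdeg G' y ≠ 2 := by
      rw [hvdeg y hyu hyv]; exact hcontracted y
    set x' : {w : V // vdeg G' w ≠ 2} := ⟨x, hxdeg⟩ with hx'def
    set y' : {w : V // vdeg G' w ≠ 2} := ⟨y, hydeg⟩ with hy'def
    have hx'y' : x' ≠ y' := fun h => hxy (congrArg Subtype.val h)
    have hsadj : ¬ (suppress G').Adj x' y' := by
      rintro ⟨hne, p, hp, hint⟩
      rcases classify hnuv' hdeg2 p hp hxy hint with hdir | ⟨w, hw2, hwa, hwb⟩
      · exact hnadjG' hdir
      · exact hcaseA ⟨w, hw2, hwa.symm, hwb⟩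
    have hsconn : ConnK (suppress G') 3 x' y' :=
      three_paths_of_threeconn hconn hx'y' hsadj
    exact hnK (connK_lift hnuv' hdeg2 hcaseA hsconn)
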